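/- For 0 ≤ k ≤ n, the number of partial pairings between a set of k left points and a set of n-k right points that pair exactly j left points with j right points is (k choose j)(n-k choose j) j!, and the weighted sum ∑_{j=0}^{min(k,n-k)} (k choose j)(n-k choose j) j! · √((k-j)!) · √((n-k-j)!) is at most 2^n √(n!). -/

import Mathlib

open Finset

section count
variable {k m j : ℕ}

def PP (k m : ℕ) (p : Finset (Fin k × Fin m)) (j : ℕ) : Prop :=
  p.card = j ∧ ∀ a ∈ p, ∀ b ∈ p, a ≠ b → a.1 ≠ b.1 ∧ a.2 ≠ b.2

def emb (s : Finset (Fin k)) (f : ↥s ↪ Fin m) : ↥s ↪ Fin k × Fin m :=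
  ⟨fun a => ((a : Fin k), f a), fun a b h => Subtype.ext (congrArg Prod.fst h)⟩

lemma img_fst (s : Finset (Fin k)) (f : ↥s ↪ Fin m) :
    (s.attach.map (emb s f)).image Prod.fst = s := by
  ext a
  simp only [Finset.mem_image, Finset.mem_map, Finset.mem_attach, true_and, emb,
    Function.Embedding.coeFn_mk]
  constructor
  · rintro ⟨z, ⟨u, rfl⟩, rfl⟩
    exact u.2
  · intro ha
    exact ⟨(a, f ⟨a, ha⟩), ⟨⟨a, ha⟩, rfl⟩, rfl⟩

def g (x : Σ s : {s : Finset (Fin k) // s.card = j}, (↥(s.1 : Finset (Fin k)) ↪ Fin m)) :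
    {p : Finset (Fin k × Fin m) // PP k m p j} := by
  refine ⟨x.1.1.attach.map (emb x.1.1 x.2), ?_, ?_⟩
  · simp [x.1.2]
  · rintro a ha b hb hne
    simp only [mem_map, mem_attach, true_and, emb, Function.Embedding.coeFn_mk] at ha hb
    obtain ⟨u, rfl⟩ := ha
    obtain ⟨v, rfl⟩ := hb
    have huv : u ≠ v := fun h => hne (by rw [h])
    exact ⟨fun h => huv (Subtype.ext h), fun h => huv (x.2.injective h)⟩

lemma g_inj : Function.Injective (g (k := k) (m := m) (j := j)) := by
  rintro ⟨⟨s, hs⟩, f⟩ ⟨⟨t, ht⟩, f'⟩ h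
  have he : s.attach.map (emb s f) = t.attach.map (emb t f') := congrArg Subtype.val h
  have hst : s = t := by
    rw [← img_fst s f, ← img_fst t f', he]
  subst hst
  have hf : f = f' := by
    ext ⟨a, ha⟩
    have hm : ((a : Fin k), f ⟨a, ha⟩) ∈ s.attach.map (emb s f') := by
      rw [← he]
      simp only [mem_map, mem_attach, true_and, emb, Function.Embedding.coeFn_mk]
      exact ⟨⟨a, ha⟩, rfl⟩
    simp only [mem_map, mem_attach, true_and, emb, Function.Embedding.coeFn_mk,
      Prod.mk.injEq] at hm
    change ∃ u : ↥s, ((u : Fin k), f' u) = (a, f ⟨a, ha⟩) at hm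
    simp only [Prod.mk.injEq] at hm
    obtain ⟨u, hu1, hu2⟩ := hm
    have hu : u = ⟨a, ha⟩ := Subtype.ext hu1
    rw [hu] at hu2
    exact congrArg Fin.val hu2.symm
  subst hf
  rfl

lemma g_surj : Function.Surjective (g (k := k) (m := m) (j := j)) := by
  rintro ⟨p, hcard, hdist⟩
  have hinj : Set.InjOn Prod.fst (↑p : Set (Fin k × Fin m)) := by
    intro a ha b hb hab
    by_contra hne
    exact (hdist a ha b hb hne).1 hab
  have hs : (p.image Prod.fst).card = j := by
    rw [Finset.card_image_of_injOn hinj, hcard]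
  have hex : ∀ a ∈ p.image Prod.fst, ∃! x, x ∈ p ∧ x.1 = a := by
    intro a ha
    obtain ⟨x, hx, hx1⟩ := Finset.mem_image.mp ha
    refine ⟨x, ⟨hx, hx1⟩, ?_⟩
    rintro y ⟨hy, hy1⟩
    exact hinj hy hx (by rw [hy1, hx1])
  set ch : ↥(p.image Prod.fst) → Fin k × Fin m :=
    fun a => Finset.choose (fun x => x.1 = (a : Fin k)) p (hex a a.2) with hch
  have hchmem : ∀ a, ch a ∈ p := fun a =>
    Finset.choose_mem (fun x => x.1 = (a : Fin k)) p (hex a a.2)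
  have hchfst : ∀ a, (ch a).1 = (a : Fin k) := fun a =>
    Finset.choose_property (fun x => x.1 = (a : Fin k)) p (hex a a.2)
  have hfinj : Function.Injective (fun a => (ch a).2) := by
    intro a b h
    by_contra hne
    have hxy : ch a ≠ ch b := by
      intro hxy
      exact hne (Subtype.ext (by rw [← hchfst a, ← hchfst b, hxy]))
    exact (hdist (ch a) (hchmem a) (ch b) (hchmem b) hxy).2 h
  refine ⟨⟨⟨p.image Prod.fst, hs⟩, ⟨fun a => (ch a).2, hfinj⟩⟩, ?_⟩
  apply Subtype.ext
  apply Finset.eq_of_subset_of_card_le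
  · intro z hz
    simp only [g, mem_map, mem_attach, true_and, emb, Function.Embedding.coeFn_mk] at hz
    obtain ⟨u, rfl⟩ := hz
    have : ((u : Fin k), (ch u).2) = ch u := by
      rw [← hchfst u]
    rw [this]
    exact hchmem u
  · simp only [g, Finset.card_map, Finset.card_attach, hs, hcard, le_refl]

lemma count_pp (k m j : ℕ) : Nat.card {p : Finset (Fin k × Fin m) // PP k m p j}
    = k.choose j * m.choose j * Nat.factorial j := by
  rw [← Nat.card_congr (Equiv.ofBijective g ⟨g_inj, g_surj⟩)]
  rw [Nat.card_eq_fintype_card, Fintype.card_sigma]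
  have h : ∀ s : {s : Finset (Fin k) // s.card = j},
      Fintype.card (↥(s.1 : Finset (Fin k)) ↪ Fin m) = m.descFactorial j := by
    intro s
    rw [Fintype.card_embedding_eq, Fintype.card_coe, s.2, Fintype.card_fin]
  simp only [h, Finset.sum_const, smul_eq_mul, Finset.card_univ, Fintype.card_finset_len,
    Fintype.card_fin, Nat.descFactorial_eq_factorial_mul_choose]
  ring

end count

lemma key_term (k m j : ℕ) (hjk : j ≤ k) (hjm : j ≤ m) :
    (Nat.factorial j : ℝ) * Real.sqrt (Nat.factorial (k - j)) * Real.sqrt (Nat.factorial (m - j))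
      ≤ Real.sqrt (Nat.factorial (k + m)) := by
  have hd1 : Nat.factorial j * Nat.factorial (k - j) ≤ Nat.factorial k :=
    Nat.le_of_dvd (Nat.factorial_pos k) (Nat.factorial_mul_factorial_dvd_factorial hjk)
  have hd2 : Nat.factorial j * Nat.factorial (m - j) ≤ Nat.factorial m :=
    Nat.le_of_dvd (Nat.factorial_pos m) (Nat.factorial_mul_factorial_dvd_factorial hjm)
  have hd3 : Nat.factorial k * Nat.factorial m ≤ Nat.factorial (k + m) :=
    Nat.le_of_dvd (Nat.factorial_pos _) (Nat.factorial_mul_factorial_dvd_factorial_add k m)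
  have hq : Real.sqrt (Nat.factorial j) * Real.sqrt (Nat.factorial j) = (Nat.factorial j : ℝ) :=
    Real.mul_self_sqrt (by positivity)
  calc (Nat.factorial j : ℝ) * Real.sqrt (Nat.factorial (k - j)) * Real.sqrt (Nat.factorial (m - j))
      = (Real.sqrt (Nat.factorial j) * Real.sqrt (Nat.factorial (k - j))) *
        (Real.sqrt (Nat.factorial j) * Real.sqrt (Nat.factorial (m - j))) := by (conv_lhs => rw [← hq]); ring
    _ = Real.sqrt ((Nat.factorial j : ℝ) * (Nat.factorial (k - j) : ℝ)) *
        Real.sqrt ((Nat.factorial j : ℝ) * (Nat.factorial (m - j) : ℝ)) := by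
        rw [Real.sqrt_mul (by positivity), Real.sqrt_mul (by positivity)]
    _ ≤ Real.sqrt (Nat.factorial k) * Real.sqrt (Nat.factorial m) := by
        apply mul_le_mul (Real.sqrt_le_sqrt ?_) (Real.sqrt_le_sqrt ?_) (Real.sqrt_nonneg _)
          (Real.sqrt_nonneg _)
        · exact_mod_cast hd1
        · exact_mod_cast hd2
    _ = Real.sqrt ((Nat.factorial k : ℝ) * (Nat.factorial m : ℝ)) :=
        (Real.sqrt_mul (by positivity) _).symm
    _ ≤ Real.sqrt (Nat.factorial (k + m)) := Real.sqrt_le_sqrt (by exact_mod_cast hd3)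

lemma sum_choose_bound (k m : ℕ) :
    ∑ j ∈ Finset.range (min k m + 1), Nat.choose k j * Nat.choose m j ≤ 2 ^ (k + m) := by
  have hcm : ∀ j : ℕ, Nat.choose m j ≤ 2 ^ m := by
    intro j
    rcases le_or_gt j m with h | h
    · calc Nat.choose m j ≤ ∑ i ∈ Finset.range (m + 1), Nat.choose m i :=
          Finset.single_le_sum (fun i _ => Nat.zero_le _)
            (Finset.mem_range.mpr (Nat.lt_succ_of_le h))
        _ = 2 ^ m := Nat.sum_range_choose m
    · simp [Nat.choose_eq_zero_of_lt h]
  calc ∑ j ∈ Finset.range (min k m + 1), Nat.choose k j * Nat.choose m j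
      ≤ ∑ j ∈ Finset.range (min k m + 1), Nat.choose k j * 2 ^ m :=
        Finset.sum_le_sum fun j _ => Nat.mul_le_mul_left _ (hcm j)
    _ = (∑ j ∈ Finset.range (min k m + 1), Nat.choose k j) * 2 ^ m := by
        rw [← Finset.sum_mul]
    _ ≤ (∑ j ∈ Finset.range (k + 1), Nat.choose k j) * 2 ^ m := by
        apply Nat.mul_le_mul_right
        apply Finset.sum_le_sum_of_subset
        apply Finset.range_subset_range.mpr
        omega
    _ = 2 ^ k * 2 ^ m := by rw [Nat.sum_range_choose]
    _ = 2 ^ (k + m) := (pow_add 2 k m).symm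

lemma ineq (k m : ℕ) :
    (∑ j ∈ Finset.range (min k m + 1),
        (Nat.choose k j * Nat.choose m j * Nat.factorial j : ℝ) *
          Real.sqrt (Nat.factorial (k - j)) * Real.sqrt (Nat.factorial (m - j)))
      ≤ 2 ^ (k + m) * Real.sqrt (Nat.factorial (k + m)) := by
  calc (∑ j ∈ Finset.range (min k m + 1),
        (Nat.choose k j * Nat.choose m j * Nat.factorial j : ℝ) *
          Real.sqrt (Nat.factorial (k - j)) * Real.sqrt (Nat.factorial (m - j)))
      ≤ ∑ j ∈ Finset.range (min k m + 1),
          (Nat.choose k j * Nat.choose m j : ℝ) * Real.sqrt (Nat.factorial (k + m)) := by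
        apply Finset.sum_le_sum
        intro j hj
        have hj' := Finset.mem_range.mp hj
        have hjk : j ≤ k := by omega
        have hjm : j ≤ m := by omega
        have hkey := key_term k m j hjk hjm
        have hnn : (0 : ℝ) ≤ (Nat.choose k j * Nat.choose m j : ℝ) := by positivity
        calc (Nat.choose k j * Nat.choose m j * Nat.factorial j : ℝ) *
              Real.sqrt (Nat.factorial (k - j)) * Real.sqrt (Nat.factorial (m - j))
            = (Nat.choose k j * Nat.choose m j : ℝ) *
              ((Nat.factorial j : ℝ) * Real.sqrt (Nat.factorial (k - j)) *
                Real.sqrt (Nat.factorial (m - j))) := by push_cast; ring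
          _ ≤ (Nat.choose k j * Nat.choose m j : ℝ) * Real.sqrt (Nat.factorial (k + m)) :=
              mul_le_mul_of_nonneg_left hkey hnn
    _ = (∑ j ∈ Finset.range (min k m + 1), (Nat.choose k j * Nat.choose m j : ℝ)) *
          Real.sqrt (Nat.factorial (k + m)) := by rw [← Finset.sum_mul]
    _ ≤ 2 ^ (k + m) * Real.sqrt (Nat.factorial (k + m)) := by
        apply mul_le_mul_of_nonneg_right _ (Real.sqrt_nonneg _)
        calc (∑ j ∈ Finset.range (min k m + 1), (Nat.choose k j * Nat.choose m j : ℝ))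
            = ((∑ j ∈ Finset.range (min k m + 1), Nat.choose k j * Nat.choose m j : ℕ) : ℝ) := by
              push_cast; rfl
          _ ≤ ((2 ^ (k + m) : ℕ) : ℝ) := by exact_mod_cast sum_choose_bound k m
          _ = 2 ^ (k + m) := by push_cast; rfl


/-- For `0 ≤ k ≤ n`, the number of partial pairings between a set of `k` left
points and a set of `n-k` right points pairing exactly `j` left points with `j` right points
(i.e. sets of `j` pairs with pairwise distinct left members and pairwise distinct right
members) equals `C(k,j) C(n-k,j) j!`, and the weighted sum
`∑_{j=0}^{min(k,n-k)} C(k,j) C(n-k,j) j! √((k-j)!) √((n-k-j)!)` is at most `2ⁿ √(n!)`. -/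
theorem stmt9 (n k : ℕ) (hk : k ≤ n) :
    (∀ j : ℕ,
      Nat.card {p : Finset (Fin k × Fin (n - k)) //
          p.card = j ∧ ∀ a ∈ p, ∀ b ∈ p, a ≠ b → a.1 ≠ b.1 ∧ a.2 ≠ b.2}
        = Nat.choose k j * Nat.choose (n - k) j * Nat.factorial j) ∧
    (∑ j ∈ Finset.range (min k (n - k) + 1),
        (Nat.choose k j * Nat.choose (n - k) j * Nat.factorial j : ℝ) *
          Real.sqrt (Nat.factorial (k - j)) * Real.sqrt (Nat.factorial (n - k - j)))
      ≤ 2 ^ n * Real.sqrt (Nat.factorial n) := by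
  have hkm : k + (n - k) = n := Nat.add_sub_cancel' hk
  constructor
  · intro j
    exact count_pp k (n - k) j
  · have := ineq k (n - k)
    rwa [hkm] at this
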